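/- Let {a_i} be a sequence of nonnegative reals with ∑_{i : a_i ≠ 0}(a_i-1)^2 < ∞ and let k > 0 be an integer. If there do NOT exist k indices n_1,…,n_k with 0 < a_{n_1} ≤ … ≤ a_{n_k} ≤ a_j for all other j with a_j ≠ 0 (i.e., the set of nonzero values has no k smallest elements), then the function f({c_i}) = ∑_i (a_i - c_i)^2 has no minimizer over the set of sequences {c_i} with c_i ∈ {-1,0,1}, ∑_i (a_i - c_i)^2 < ∞, and #{i : c_i = 0 ∧ a_i > 0} - #{i : c_i ≠ 0 ∧ a_i = 0} = k. -/

import Mathlib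

/-- Admissible index-k candidate sequences in the diagonal symmetric approximation
problem: ±1/0-valued, quadratically close to `a`, with index equal to `k`. -/
def AdmissibleSeq (a : ℕ → ℝ) (k : ℤ) (c : ℕ → ℝ) : Prop :=
  (∀ i, c i = -1 ∨ c i = 0 ∨ c i = 1) ∧
  (Summable fun i => (a i - c i) ^ 2) ∧
  {i | c i = 0 ∧ 0 < a i}.Finite ∧ {i | c i ≠ 0 ∧ a i = 0}.Finite ∧
  ({i | c i = 0 ∧ 0 < a i}.ncard : ℤ) - {i | c i ≠ 0 ∧ a i = 0}.ncard = k

/-- Any finset has a sub-finset of k smallest elements w.r.t. a valuation. -/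
lemma exists_k_smallest (a : ℕ → ℝ) : ∀ (k : ℕ) (T : Finset ℕ), k ≤ T.card →
    ∃ s ⊆ T, s.card = k ∧ ∀ t ∈ s, ∀ u ∈ T, u ∉ s → a t ≤ a u := by
  intro k
  induction k with
  | zero => intro T _; exact ⟨∅, Finset.empty_subset _, rfl, by simp⟩
  | succ k ih =>
    intro T hT
    obtain ⟨s, hsT, hcard, hmin⟩ := ih T (le_trans (Nat.le_succ k) hT)
    have hne : (T \ s).Nonempty := by
      rw [Finset.sdiff_nonempty]
      intro hsub
      have := Finset.card_le_card hsub
      omega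
    obtain ⟨u₀, hu₀, hu₀min⟩ := (T \ s).exists_min_image a hne
    refine ⟨insert u₀ s, ?_, ?_, ?_⟩
    · exact Finset.insert_subset (Finset.mem_sdiff.mp hu₀).1 hsT
    · rw [Finset.card_insert_of_notMem (Finset.mem_sdiff.mp hu₀).2, hcard]
    · intro t ht u huT hus
      rcases Finset.mem_insert.mp ht with rfl | hts
      · exact hu₀min u (Finset.mem_sdiff.mpr ⟨huT, fun h => hus (Finset.mem_insert_of_mem h)⟩)
      · exact hmin t hts u huT (fun h => hus (Finset.mem_insert_of_mem h))

/-- Nonexistence half of the diagonal symmetric approximation result for positive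
index k: if the set of nonzero values of `a` has no k smallest elements, then the
ℓ² cost has no minimizer over the admissible index-k sequences. -/
theorem stmt_4 (a : ℕ → ℝ) (ha : ∀ i, 0 ≤ a i)
    (hsum : Summable fun i => if a i ≠ 0 then (a i - 1) ^ 2 else 0)
    (k : ℕ) (hk : 0 < k)
    (hno : ¬ ∃ n : Fin k → ℕ, Function.Injective n ∧ (∀ j, 0 < a (n j)) ∧
      ∀ (i : Fin k) (j : ℕ), j ∉ Set.range n → a j ≠ 0 → a (n i) ≤ a j) :
    ¬ ∃ c : ℕ → ℝ, AdmissibleSeq a k c ∧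
      ∀ c' : ℕ → ℝ, AdmissibleSeq a k c' →
        (∑' i, (a i - c i) ^ 2) ≤ ∑' i, (a i - c' i) ^ 2 := by
  rintro ⟨c, hadm, hmin⟩
  obtain ⟨hc1, hc2, hZfin, hWfin, hidx⟩ := hadm
  set Z : Set ℕ := {i | c i = 0 ∧ 0 < a i} with hZdef
  set W : Set ℕ := {i | c i ≠ 0 ∧ a i = 0} with hWdef
  have hZk : k ≤ Z.ncard := by omega
  -- Claim: some i₀ ∈ Z has infinitely many nonzero values strictly below a i₀
  have claim : ∃ i₀ ∈ Z, {j | 0 < a j ∧ a j < a i₀}.Infinite := by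
    by_contra hcon
    push_neg at hcon
    have hF : ∀ i₀ ∈ Z, {j | 0 < a j ∧ a j < a i₀}.Finite :=
      fun i h => hcon i h
    have hTfin : (Z ∪ ⋃ i ∈ Z, {j | 0 < a j ∧ a j < a i}).Finite :=
      hZfin.union (Set.Finite.biUnion hZfin hF)
    set T : Finset ℕ := hTfin.toFinset with hTdef
    have hZT : Z ⊆ (T : Set ℕ) := by
      intro x hx
      simp only [hTdef, Finset.coe_sort_coe, Set.Finite.coe_toFinset]
      exact Or.inl hx
    have hTpos : ∀ x ∈ T, 0 < a x := by
      intro x hx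
      rw [hTdef, Set.Finite.mem_toFinset] at hx
      rcases hx with hx | hx
      · exact hx.2
      · simp only [Set.mem_iUnion] at hx
        obtain ⟨i, _, hxi⟩ := hx
        exact hxi.1
    have hkT : k ≤ T.card := by
      calc k ≤ Z.ncard := hZk
        _ ≤ (T : Set ℕ).ncard := Set.ncard_le_ncard hZT (T : Set ℕ).toFinite
        _ = T.card := by rw [Set.ncard_coe_finset]
    obtain ⟨s, hsT, hscard, hsmin⟩ := exists_k_smallest a k T hkT
    set n : Fin k → ℕ := fun i => ((s.orderIsoOfFin hscard i : s) : ℕ) with hndef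
    have hns : ∀ i, n i ∈ s := fun i => (s.orderIsoOfFin hscard i).2
    have hrange : ∀ x, x ∈ Set.range n ↔ x ∈ s := by
      intro x
      constructor
      · rintro ⟨i, rfl⟩; exact hns i
      · intro hx
        obtain ⟨i, hi⟩ := (s.orderIsoOfFin hscard).surjective ⟨x, hx⟩
        exact ⟨i, by rw [hndef]; simp [hi]⟩
    refine hno ⟨n, ?_, ?_, ?_⟩
    · intro i j hij
      have : (s.orderIsoOfFin hscard i : s) = (s.orderIsoOfFin hscard j : s) :=
        Subtype.ext hij
      exact (s.orderIsoOfFin hscard).injective this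
    · exact fun j => hTpos _ (hsT (hns j))
    · intro i j hj haj
      have hjs : j ∉ s := fun h => hj ((hrange j).mpr h)
      by_cases hjT : j ∈ T
      · exact hsmin _ (hns i) j hjT hjs
      · -- j ∉ T: so j ∉ Z and a i' ≤ a j for all i' ∈ Z
        have hjpos : 0 < a j := lt_of_le_of_ne (ha j) (Ne.symm haj)
        have hZle : ∀ i' ∈ Z, a i' ≤ a j := by
          intro i' hi'
          by_contra hlt
          push_neg at hlt
          apply hjT
          rw [hTdef, Set.Finite.mem_toFinset]
          right
          simp only [Set.mem_iUnion]
          exact ⟨i', hi', hjpos, hlt⟩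
        by_cases hZs : Z ⊆ (s : Set ℕ)
        · -- then Z = ↑s since ncard Z ≥ k = card s
          have hZeq : Z = (s : Set ℕ) := by
            refine Set.eq_of_subset_of_ncard_le hZs ?_ (s : Set ℕ).toFinite
            rw [Set.ncard_coe_finset, hscard]; exact hZk
          have : n i ∈ Z := by rw [hZeq]; exact hns i
          exact hZle _ this
        · obtain ⟨i', hi'Z, hi's⟩ := Set.not_subset.mp hZs
          have hi'T : i' ∈ T := hZT hi'Z
          calc a (n i) ≤ a i' := hsmin _ (hns i) i' hi'T hi's
            _ ≤ a j := hZle i' hi'Z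
  -- Now do the exchange
  obtain ⟨i₀, hi₀Z, hinf⟩ := claim
  have hSZ : ({j | 0 < a j ∧ a j < a i₀} \ Z).Infinite := hinf.diff hZfin
  obtain ⟨j₀, hj₀S, hj₀Z⟩ := hSZ.nonempty
  have hij : i₀ ≠ j₀ := fun h => hj₀Z (h ▸ hi₀Z)
  have hcj₀ : c j₀ ≠ 0 := fun h => hj₀Z ⟨h, hj₀S.1⟩
  have hci₀ : c i₀ = 0 := hi₀Z.1
  have hai₀ : 0 < a i₀ := hi₀Z.2
  set c' : ℕ → ℝ := Function.update (Function.update c i₀ 1) j₀ 0 with hc'def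
  have hc'i₀ : c' i₀ = 1 := by
    rw [hc'def, Function.update_of_ne hij, Function.update_self]
  have hc'j₀ : c' j₀ = 0 := by rw [hc'def, Function.update_self]
  have hc'other : ∀ i, i ≠ i₀ → i ≠ j₀ → c' i = c i := by
    intro i h1 h2
    rw [hc'def, Function.update_of_ne h2, Function.update_of_ne h1]
  -- the difference function
  set f : ℕ → ℝ := fun i => (a i - c i) ^ 2 with hfdef
  set g : ℕ → ℝ := fun i => (a i - c' i) ^ 2 with hgdef
  have hd0 : ∀ i ∉ ({i₀, j₀} : Finset ℕ), g i - f i = 0 := by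
    intro i hi
    simp only [Finset.mem_insert, Finset.mem_singleton] at hi
    push_neg at hi
    rw [hgdef, hfdef]
    simp only [hc'other i hi.1 hi.2, sub_self]
  have hdsum : Summable fun i => g i - f i := summable_of_ne_finset_zero hd0
  have hgsum : Summable g := by
    have : g = fun i => f i + (g i - f i) := by funext i; ring
    rw [this]
    exact hc2.add hdsum
  -- Z' and W'
  have hZ'eq : {i | c' i = 0 ∧ 0 < a i} = insert j₀ (Z \ {i₀}) := by
    ext i
    simp only [Set.mem_setOf_eq, Set.mem_insert_iff, Set.mem_diff, Set.mem_singleton_iff]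
    constructor
    · rintro ⟨h1, h2⟩
      by_cases hii : i = j₀
      · exact Or.inl hii
      · by_cases hii' : i = i₀
        · exfalso; rw [hii', hc'i₀] at h1; norm_num at h1
        · exact Or.inr ⟨⟨by rwa [hc'other i hii' hii] at h1, h2⟩, hii'⟩
    · rintro (rfl | ⟨⟨h1, h2⟩, h3⟩)
      · exact ⟨hc'j₀, hj₀S.1⟩
      · refine ⟨?_, h2⟩
        have hii : i ≠ j₀ := fun h => hj₀Z (h ▸ ⟨h1, h2⟩)
        rwa [hc'other i h3 hii]
  have hW'eq : {i | c' i ≠ 0 ∧ a i = 0} = W := by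
    ext i
    simp only [Set.mem_setOf_eq, hWdef]
    by_cases hii : i = i₀
    · subst hii
      constructor
      · rintro ⟨_, h2⟩; exact absurd h2 (ne_of_gt hai₀)
      · rintro ⟨_, h2⟩; exact absurd h2 (ne_of_gt hai₀)
    · by_cases hii' : i = j₀
      · subst hii'
        constructor
        · rintro ⟨_, h2⟩; exact absurd h2 (ne_of_gt hj₀S.1)
        · rintro ⟨_, h2⟩; exact absurd h2 (ne_of_gt hj₀S.1)
      · rw [hc'other i hii hii']
  have hZ'fin : {i | c' i = 0 ∧ 0 < a i}.Finite := by
    rw [hZ'eq]; exact ((hZfin.diff).insert j₀)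
  have hZ'card : {i | c' i = 0 ∧ 0 < a i}.ncard = Z.ncard := by
    rw [hZ'eq]
    rw [Set.ncard_insert_of_notMem (fun h => hj₀Z h.1) (hZfin.diff)]
    rw [Set.ncard_diff_singleton_of_mem hi₀Z]
    have : 1 ≤ Z.ncard := by omega
    omega
  have hadm' : AdmissibleSeq a k c' := by
    refine ⟨?_, hgsum, hZ'fin, by rw [hW'eq]; exact hWfin, ?_⟩
    · intro i
      by_cases h1 : i = j₀
      · subst h1; rw [hc'j₀]; tauto
      · by_cases h2 : i = i₀
        · subst h2; rw [hc'i₀]; tauto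
        · rw [hc'other i h2 h1]; exact hc1 i
    · rw [hZ'card, hW'eq]
      exact hidx
  -- strict cost decrease
  have hdiff : ∑' i, (g i - f i) = (g i₀ - f i₀) + (g j₀ - f j₀) := by
    rw [tsum_eq_sum (s := {i₀, j₀}) hd0, Finset.sum_pair hij]
  have hneg : (g i₀ - f i₀) + (g j₀ - f j₀) < 0 := by
    have h1 : g i₀ - f i₀ = (a i₀ - 1) ^ 2 - a i₀ ^ 2 := by
      rw [hgdef, hfdef]; simp only [hc'i₀, hci₀, sub_zero]
    have h2 : g j₀ - f j₀ = a j₀ ^ 2 - (a j₀ - c j₀) ^ 2 := by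
      rw [hgdef, hfdef]; simp only [hc'j₀, sub_zero]
    rw [h1, h2]
    have haj₀ : 0 < a j₀ := hj₀S.1
    have hlt : a j₀ < a i₀ := hj₀S.2
    rcases hc1 j₀ with h | h | h
    · rw [h]; nlinarith
    · exact absurd h hcj₀
    · rw [h]; nlinarith
  have htsub : ∑' i, g i - ∑' i, f i = ∑' i, (g i - f i) := (hgsum.tsum_sub hc2).symm
  have hlt : ∑' i, g i < ∑' i, f i := by
    have := hdiff ▸ htsub
    linarith [hneg, this]
  exact absurd (hmin c' hadm') (not_le.mpr hlt)
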